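/- The diamond K_4 − e (the complete graph on 4 vertices with one edge removed) is not a TS_k-reconfiguration graph for any integer k ≥ 2; i.e., there is no graph G with TS_k(G) isomorphic to K_4 − e. -/

import Mathlib

open SimpleGraph

/-- `I` is an independent (stable) set of `G`. -/
def IsIndep {V : Type*} (G : SimpleGraph V) (I : Finset V) : Prop :=
  ∀ u ∈ I, ∀ v ∈ I, ¬ G.Adj u v

/-- Vertices of the `TS_k`-reconfiguration graph: size-`k` independent sets of `G`. -/
abbrev TSVert {V : Type*} (G : SimpleGraph V) (k : ℕ) := {I : Finset V // I.card = k ∧ IsIndep G I}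

/-- The `TS_k`-reconfiguration graph of `G`: size-`k` independent sets, adjacent iff
`I \ J = {u}`, `J \ I = {v}` and `uv ∈ E(G)`. -/
def TSk {V : Type*} [DecidableEq V] (G : SimpleGraph V) (k : ℕ) : SimpleGraph (TSVert G k) :=
  SimpleGraph.fromRel (fun I J =>
    ∃ u v, (I : Finset V) \ (J : Finset V) = {u} ∧
      (J : Finset V) \ (I : Finset V) = {v} ∧ G.Adj u v)

/-- The diamond `K_4 − e`: the complete graph on four vertices with one edge removed. -/
def diamond : SimpleGraph (Fin 4) :=
  (⊤ : SimpleGraph (Fin 4)).deleteEdges {s((0 : Fin 4), (1 : Fin 4))}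

private lemma sdiff_facts {V : Type*} [DecidableEq V] {A B : Finset V} {a : V}
    (h : A \ B = {a}) : a ∈ A ∧ a ∉ B := by
  have : a ∈ A \ B := h ▸ Finset.mem_singleton_self a
  exact Finset.mem_sdiff.mp this

private lemma mem_of_sdiff {V : Type*} [DecidableEq V] {A B : Finset V} {a x : V}
    (h : A \ B = {a}) (hx : x ∈ A) (hne : x ≠ a) : x ∈ B := by
  by_contra hB
  exact hne (Finset.mem_singleton.mp (h ▸ Finset.mem_sdiff.mpr ⟨hx, hB⟩))

/-- Key lemma: in a triangle of `TS_k`, the token leaving the base set is the same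
for both incident edges. -/
private lemma same_token {V : Type*} [DecidableEq V] {G : SimpleGraph V}
    {A B C : Finset V} (hA : IsIndep G A) {a a' x y : V}
    (hAB : A \ B = {a}) (hAC : A \ C = {a'})
    (hBC : B \ C = {x}) (hCB : C \ B = {y}) (hxy : G.Adj x y) : a' = a := by
  by_contra hne
  obtain ⟨haA, haB⟩ := sdiff_facts hAB
  obtain ⟨ha'A, ha'C⟩ := sdiff_facts hAC
  have haC : a ∈ C := by
    by_contra h
    exact hne (Finset.mem_singleton.mp (hAC ▸ Finset.mem_sdiff.mpr ⟨haA, h⟩)).symm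
  have hya : a = y := Finset.mem_singleton.mp (hCB ▸ Finset.mem_sdiff.mpr ⟨haC, haB⟩)
  have ha'B : a' ∈ B := mem_of_sdiff hAB ha'A hne
  have hxa' : a' = x := Finset.mem_singleton.mp (hBC ▸ Finset.mem_sdiff.mpr ⟨ha'B, ha'C⟩)
  exact hA a' ha'A a haA (hxa' ▸ hya ▸ hxy)

private lemma tsk_adj_elim {V : Type*} [DecidableEq V] {G : SimpleGraph V} {k : ℕ}
    {I J : TSVert G k} (h : (TSk G k).Adj I J) :
    ∃ u v, (I : Finset V) \ (J : Finset V) = {u} ∧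
      (J : Finset V) \ (I : Finset V) = {v} ∧ G.Adj u v := by
  rw [TSk, fromRel_adj] at h
  obtain ⟨hne, h | h⟩ := h
  · exact h
  · obtain ⟨u, v, h1, h2, h3⟩ := h
    exact ⟨v, u, h2, h1, h3.symm⟩

private lemma tsk_adj_intro {V : Type*} [DecidableEq V] {G : SimpleGraph V} {k : ℕ}
    {I J : TSVert G k} {u v : V} (hne : I ≠ J)
    (h1 : (I : Finset V) \ (J : Finset V) = {u})
    (h2 : (J : Finset V) \ (I : Finset V) = {v}) (h3 : G.Adj u v) :
    (TSk G k).Adj I J := by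
  rw [TSk, fromRel_adj]
  exact ⟨hne, Or.inl ⟨u, v, h1, h2, h3⟩⟩

/-- The diamond `K_4 − e` is not a `TS_k`-reconfiguration graph for any `k ≥ 2`. -/
theorem stmt11 (k : ℕ) (hk : 2 ≤ k) :
    ¬ ∃ (W : Type) (_ : Fintype W) (dW : DecidableEq W) (G : SimpleGraph W),
      Nonempty ((@TSk W dW G k) ≃g diamond) := by
  rintro ⟨W, _, dW, G, ⟨e⟩⟩
  set A : TSVert G k := e.symm 0 with hA
  set D : TSVert G k := e.symm 1 with hD
  set B : TSVert G k := e.symm 2 with hB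
  set C : TSVert G k := e.symm 3 with hC
  have hinj := e.symm.toEquiv.injective
  have hAB : A ≠ B := fun h => by simpa using hinj h
  have hAC : A ≠ C := fun h => by simpa using hinj h
  have hAD : A ≠ D := fun h => by simpa using hinj h
  have hBC : B ≠ C := fun h => by simpa using hinj h
  have hBD : B ≠ D := fun h => by simpa using hinj h
  have hCD : C ≠ D := fun h => by simpa using hinj h
  -- adjacency facts
  have adjAB : (TSk G k).Adj A B := e.symm.map_rel_iff.mpr (by simp [diamond])
  have adjAC : (TSk G k).Adj A C := e.symm.map_rel_iff.mpr (by simp [diamond])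
  have adjBC : (TSk G k).Adj B C := e.symm.map_rel_iff.mpr (by simp [diamond])
  have adjBD : (TSk G k).Adj B D := e.symm.map_rel_iff.mpr (by simp [diamond])
  have adjCD : (TSk G k).Adj C D := e.symm.map_rel_iff.mpr (by simp [diamond])
  have nadjAD : ¬ (TSk G k).Adj A D := fun h => by
    have := e.symm.map_rel_iff.mp h
    simp [diamond] at this
  obtain ⟨a, b, hABa, hBAb, hab⟩ := tsk_adj_elim adjAB
  obtain ⟨a2, c, hACa, hCAc, hac⟩ := tsk_adj_elim adjAC
  obtain ⟨b3, c3, hBCb, hCBc, hbc⟩ := tsk_adj_elim adjBC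
  obtain ⟨b4, d, hBDb, hDBd, hbd⟩ := tsk_adj_elim adjBD
  obtain ⟨c5, d5, hCDc, hDCd, hcd⟩ := tsk_adj_elim adjCD
  -- identify tokens
  have hIA : IsIndep G (A : Finset W) := A.2.2
  have hIB : IsIndep G (B : Finset W) := B.2.2
  have hIC : IsIndep G (C : Finset W) := C.2.2
  have hID : IsIndep G (D : Finset W) := D.2.2
  have e1 : a2 = a := same_token hIA hABa hACa hBCb hCBc hbc
  rw [e1] at hACa hac
  have e2 : b3 = b := same_token hIB hBAb hBCb hACa hCAc hac
  rw [e2] at hBCb hbc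
  have e3 : c3 = c := same_token hIC hCAc hCBc hABa hBAb hab
  rw [e3] at hCBc hbc
  have e4 : b4 = b := same_token hIB hBCb hBDb hCDc hDCd hcd
  rw [e4] at hBDb hbd
  have e5 : c5 = c := same_token hIC hCBc hCDc hBDb hDBd hbd
  rw [e5] at hCDc hcd
  have e6 : d5 = d := same_token hID hDBd hDCd hBCb hCBc hbc
  rw [e6] at hDCd hcd
  -- structure
  set S : Finset W := (A : Finset W) ∩ (B : Finset W) with hS
  obtain ⟨haA, haB⟩ := sdiff_facts hABa
  obtain ⟨hbB, hbA⟩ := sdiff_facts hBAb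
  obtain ⟨haA', haC⟩ := sdiff_facts hACa
  obtain ⟨hcC, hcA⟩ := sdiff_facts hCAc
  obtain ⟨hbB', hbC⟩ := sdiff_facts hBCb
  obtain ⟨hcC', hcB⟩ := sdiff_facts hCBc
  obtain ⟨hbB'', hbD⟩ := sdiff_facts hBDb
  obtain ⟨hdD, hdB⟩ := sdiff_facts hDBd
  obtain ⟨hcC'', hcD⟩ := sdiff_facts hCDc
  obtain ⟨hdD', hdC⟩ := sdiff_facts hDCd
  have haS : a ∉ S := fun h => haB (Finset.mem_inter.mp h).2
  have hbS : b ∉ S := fun h => hbA (Finset.mem_inter.mp h).1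
  have hdS : d ∉ S := fun h => hdB (Finset.mem_inter.mp h).2
  have hmemA : ∀ x, x ∈ (A : Finset W) ↔ x ∈ S ∨ x = a := by
    intro x
    constructor
    · intro hx
      by_cases h : x = a
      · exact Or.inr h
      · exact Or.inl (Finset.mem_inter.mpr ⟨hx, mem_of_sdiff hABa hx h⟩)
    · rintro (h | rfl)
      · exact (Finset.mem_inter.mp h).1
      · exact haA
  have hSB : ∀ x ∈ S, x ∈ (B : Finset W) := fun x h => (Finset.mem_inter.mp h).2
  have hmemD : ∀ x, x ∈ (D : Finset W) ↔ x ∈ S ∨ x = d := by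
    intro x
    constructor
    · intro hx
      by_cases h : x = d
      · exact Or.inr h
      · have hxB : x ∈ (B : Finset W) := mem_of_sdiff hDBd hx h
        have hxb : x ≠ b := fun hh => hbD (hh ▸ hx)
        exact Or.inl (Finset.mem_inter.mpr ⟨mem_of_sdiff hBAb hxB hxb, hxB⟩)
    · rintro (h | rfl)
      · have hxB := hSB x h
        have hxb : x ≠ b := fun hh => hbA (hh ▸ (Finset.mem_inter.mp h).1)
        exact mem_of_sdiff hBDb hxB hxb
      · exact hdD
  -- a ≠ d
  have had : a ≠ d := by
    intro h
    apply hAD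
    apply Subtype.ext
    apply Finset.ext
    intro x
    rw [hmemA, hmemD, h]
  -- A \ D = {a}, D \ A = {d}
  have hADa : (A : Finset W) \ (D : Finset W) = {a} := by
    apply Finset.ext
    intro x
    simp only [Finset.mem_sdiff, Finset.mem_singleton, hmemA, hmemD]
    constructor
    · rintro ⟨h1 | rfl, h2⟩
      · exact absurd (Or.inl h1) h2
      · rfl
    · rintro rfl
      exact ⟨Or.inr rfl, by rintro (h | h) <;> [exact haS h; exact had h]⟩
  have hDAd : (D : Finset W) \ (A : Finset W) = {d} := by
    apply Finset.ext
    intro x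
    simp only [Finset.mem_sdiff, Finset.mem_singleton, hmemA, hmemD]
    constructor
    · rintro ⟨h1 | rfl, h2⟩
      · exact absurd (Or.inl h1) h2
      · rfl
    · rintro rfl
      exact ⟨Or.inr rfl, by rintro (h | h) <;> [exact hdS h; exact had h.symm]⟩
  have hnad : ¬ G.Adj a d := fun h => nadjAD (tsk_adj_intro hAD hADa hDAd h)
  -- cardinality of S
  have hAeq : (A : Finset W) = insert a S := by
    apply Finset.ext
    intro x
    rw [hmemA, Finset.mem_insert]
    exact or_comm
  have hScard : S.card + 1 = k := by
    have := A.2.1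
    rw [hAeq, Finset.card_insert_of_notMem haS] at this
    omega
  obtain ⟨s, hs⟩ : ∃ s, s ∈ S := Finset.Nonempty.exists_mem (Finset.card_pos.mp (by omega))
  -- the fifth independent set
  set E : Finset W := insert a (insert d (S.erase s)) with hE
  have hdE : d ∉ S.erase s := fun h => hdS (Finset.mem_of_mem_erase h)
  have haE : a ∉ insert d (S.erase s) := by
    simp only [Finset.mem_insert]
    rintro (h | h)
    · exact had h
    · exact haS (Finset.mem_of_mem_erase h)
  have hEcard : E.card = k := by
    rw [hE, Finset.card_insert_of_notMem haE, Finset.card_insert_of_notMem hdE,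
      Finset.card_erase_of_mem hs]
    omega
  have hSsubA : ∀ x ∈ S.erase s, x ∈ (A : Finset W) := fun x h =>
    (Finset.mem_inter.mp (Finset.mem_of_mem_erase h)).1
  have hSsubD : ∀ x ∈ S.erase s, x ∈ (D : Finset W) := fun x h =>
    (hmemD x).mpr (Or.inl (Finset.mem_of_mem_erase h))
  have hEindep : IsIndep G E := by
    intro u hu v hv
    simp only [hE, Finset.mem_insert] at hu hv
    rcases hu with hu | hu | hu <;> rcases hv with hv | hv | hv
    · rw [hu, hv]; exact G.irrefl
    · rw [hu, hv]; exact hnad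
    · rw [hu]; exact hIA a haA v (hSsubA v hv)
    · rw [hu, hv]; exact fun h => hnad h.symm
    · rw [hu, hv]; exact G.irrefl
    · rw [hu]; exact hID d hdD v (hSsubD v hv)
    · rw [hv]; exact hIA u (hSsubA u hu) a haA
    · rw [hv]; exact hID u (hSsubD u hu) d hdD
    · exact hIA u (hSsubA u hu) v (hSsubA v hv)
  have hEcard' : E.card = k ∧ IsIndep G E := ⟨hEcard, hEindep⟩
  set EV : TSVert G k := ⟨E, hEcard'⟩ with hEV
  -- s distinguishes E from A,B,C,D
  have hsE : s ∉ E := by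
    simp only [hE, Finset.mem_insert]
    rintro (h | h | h)
    · exact haS (h ▸ hs)
    · exact hdS (h ▸ hs)
    · exact Finset.notMem_erase s S h
  have hsA : s ∈ (A : Finset W) := (Finset.mem_inter.mp hs).1
  have hsB : s ∈ (B : Finset W) := (Finset.mem_inter.mp hs).2
  have hsC : s ∈ (C : Finset W) := by
    have : s ≠ a := fun h => haS (h ▸ hs)
    exact mem_of_sdiff hACa hsA this
  have hsD : s ∈ (D : Finset W) := (hmemD s).mpr (Or.inl hs)
  have hEA : EV ≠ A := fun h => hsE (h ▸ hsA : s ∈ (EV : Finset W))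
  have hEB : EV ≠ B := fun h => hsE (h ▸ hsB : s ∈ (EV : Finset W))
  have hEC : EV ≠ C := fun h => hsE (h ▸ hsC : s ∈ (EV : Finset W))
  have hED : EV ≠ D := fun h => hsE (h ▸ hsD : s ∈ (EV : Finset W))
  -- five distinct vertices mapped injectively into Fin 4
  have einj : Function.Injective ⇑e.toEquiv := e.toEquiv.injective
  have dAB : e A ≠ e B := fun h => hAB (einj h)
  have dAC : e A ≠ e C := fun h => hAC (einj h)
  have dAD : e A ≠ e D := fun h => hAD (einj h)
  have dAE : e A ≠ e EV := fun h => hEA (einj h).symm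
  have dBC : e B ≠ e C := fun h => hBC (einj h)
  have dBD : e B ≠ e D := fun h => hBD (einj h)
  have dBE : e B ≠ e EV := fun h => hEB (einj h).symm
  have dCD : e C ≠ e D := fun h => hCD (einj h)
  have dCE : e C ≠ e EV := fun h => hEC (einj h).symm
  have dDE : e D ≠ e EV := fun h => hED (einj h).symm
  have h5 : ({e A, e B, e C, e D, e EV} : Finset (Fin 4)).card = 5 := by
    rw [Finset.card_insert_of_notMem (by simp [dAB, dAC, dAD, dAE]),
      Finset.card_insert_of_notMem (by simp [dBC, dBD, dBE]),
      Finset.card_insert_of_notMem (by simp [dCD, dCE]),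
      Finset.card_insert_of_notMem (by simp [dDE]),
      Finset.card_singleton]
  have hle := Finset.card_le_univ ({e A, e B, e C, e D, e EV} : Finset (Fin 4))
  rw [h5] at hle
  simp [Fintype.card_fin] at hle
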